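/- Let k ≥ 5 and let (Hᵢ, eᵢ)_{i∈[d]} be a simple K_k-chain: copies H₁,…,H_d of K_k on pairwise disjoint vertex sets except that consecutive copies Hᵢ, Hᵢ₊₁ share exactly the two endpoints of the edge eᵢ. Then any copy F of K_k minus an edge in G := ∪ᵢ Hᵢ is contained in a single Hᵢ. -/

import Mathlib

open SimpleGraph Finset

/-- The union of the cliques on the vertex sets `A i`, `i ∈ [d]`. -/
def unionCliques {V : Type*} [DecidableEq V] (A : ℕ → Finset V) (d : ℕ) : SimpleGraph V where
  Adj u v := u ≠ v ∧ ∃ i ∈ Finset.Icc 1 d, u ∈ A i ∧ v ∈ A i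
  symm := by
    constructor
    intro u v h
    obtain ⟨hne, i, hi, hu, hv⟩ := h
    exact ⟨hne.symm, i, hi, hv, hu⟩
  loopless := ⟨fun u h => h.1 rfl⟩

/-- Observation 2.4: in a simple `K_k`-chain (`k ≥ 5`), i.e. copies `H₁, …, H_d` of `K_k`
with pairwise disjoint vertex sets except that consecutive ones share exactly the two
endpoints of the edge `eᵢ`, every copy `F` of `K_k` minus an edge in `G = ∪ᵢ Hᵢ` is
contained in a single `Hᵢ`. -/
theorem stmt_11 {V : Type*} [DecidableEq V] (k d : ℕ) (hk : 5 ≤ k)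
    (A : ℕ → Finset V) (e : ℕ → Sym2 V)
    (hA : ∀ i ∈ Finset.Icc 1 d, (A i).card = k)
    -- non-consecutive copies are vertex-disjoint
    (hdisj : ∀ i ∈ Finset.Icc 1 d, ∀ j ∈ Finset.Icc 1 d, i + 1 < j → A i ∩ A j = ∅)
    -- consecutive copies intersect exactly in the two endpoints of the edge `eᵢ`
    (hcons : ∀ i ∈ Finset.Icc 1 (d - 1),
      ¬ (e i).IsDiag ∧ ∀ x : V, (x ∈ A i ∩ A (i + 1) ↔ x ∈ e i)) :
    -- every copy of `K_k` minus an edge in `∪ᵢ Hᵢ` lies in a single `Hᵢ`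
    ∀ (S : Finset V) (x y : V), S.card = k → x ∈ S → y ∈ S → x ≠ y →
      (∀ u ∈ S, ∀ v ∈ S, u ≠ v → s(u, v) ≠ s(x, y) → (unionCliques A d).Adj u v) →
      ∃ i ∈ Finset.Icc 1 d, S ⊆ A i := by
  intro S x y hScard hxS hyS hxy hadj
  -- every vertex of S lies in some A i
  have hex : ∀ u ∈ S, ∃ i, i ∈ Finset.Icc 1 d ∧ u ∈ A i := by
    intro u hu
    have hne : (S \ {u, x, y}).Nonempty := by
      rw [Finset.sdiff_nonempty]
      intro hsub
      have h1 := Finset.card_le_card hsub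
      have h2 : ({u, x, y} : Finset V).card ≤ 3 := by
        apply le_trans (Finset.card_insert_le _ _)
        simp [Finset.card_insert_le]
        exact Nat.lt_succ_of_le (Finset.card_le_two : ({x, y} : Finset V).card ≤ 2)
      omega
    obtain ⟨w, hw⟩ := hne
    simp only [Finset.mem_sdiff, Finset.mem_insert, Finset.mem_singleton, not_or] at hw
    obtain ⟨hwS, hwu, hwx, hwy⟩ := hw
    have hsym : s(u, w) ≠ s(x, y) := by
      intro h
      rw [Sym2.eq_iff] at h
      rcases h with ⟨_, h⟩ | ⟨_, h⟩ <;> [exact hwy h; exact hwx h]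
    obtain ⟨_, i, hi, hui, _⟩ : u ≠ w ∧ ∃ i ∈ Finset.Icc 1 d, u ∈ A i ∧ w ∈ A i :=
      hadj u hu w hwS (Ne.symm hwu) hsym
    exact ⟨i, hi, hui⟩
  set f : V → ℕ := fun u => sInf {i | i ∈ Finset.Icc 1 d ∧ u ∈ A i} with hfdef
  have hf1 : ∀ u ∈ S, f u ∈ Finset.Icc 1 d ∧ u ∈ A (f u) := by
    intro u hu
    exact Nat.sInf_mem (hex u hu)
  have hfle : ∀ u i, i ∈ Finset.Icc 1 d → u ∈ A i → f u ≤ i :=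
    fun u i hi hui => Nat.sInf_le ⟨hi, hui⟩
  have hint : ∀ u ∈ S, ∀ i ∈ Finset.Icc 1 d, u ∈ A i → i ≤ f u + 1 := by
    intro u hu i hi hui
    by_contra h
    push_neg at h
    have h2 := hf1 u hu
    have hd := hdisj (f u) h2.1 i hi h
    have hmem : u ∈ A (f u) ∩ A i := Finset.mem_inter.2 ⟨h2.2, hui⟩
    rw [hd] at hmem
    exact absurd hmem (Finset.notMem_empty u)
  have hadj' : ∀ u v : V, (unionCliques A d).Adj u v →
      ∃ i ∈ Finset.Icc 1 d, u ∈ A i ∧ v ∈ A i := by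
    intro u v h
    obtain ⟨_, i, hi, hu, hv⟩ : u ≠ v ∧ ∃ i ∈ Finset.Icc 1 d, u ∈ A i ∧ v ∈ A i := h
    exact ⟨i, hi, hu, hv⟩
  have hadjf : ∀ u ∈ S, ∀ v : V, (unionCliques A d).Adj u v → f v ≤ f u + 1 := by
    intro u hu v h
    obtain ⟨i, hi, hui, hvi⟩ := hadj' u v h
    exact le_trans (hfle v i hi hvi) (hint u hu i hi hui)
  -- if adjacent with f v = f u + 1 then both lie in A (f u + 1)
  have hpin : ∀ u ∈ S, ∀ v : V, (unionCliques A d).Adj u v → f v = f u + 1 →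
      u ∈ A (f u + 1) ∧ v ∈ A (f u + 1) := by
    intro u hu v h heq
    obtain ⟨i, hi, hui, hvi⟩ := hadj' u v h
    have h1 : f v ≤ i := hfle v i hi hvi
    have h2 : i ≤ f u + 1 := hint u hu i hi hui
    have : i = f u + 1 := by omega
    rw [this] at hui hvi
    exact ⟨hui, hvi⟩
  have hmiss : ∀ u ∈ S, ∀ v ∈ S, u ≠ v → ¬ (unionCliques A d).Adj u v →
      s(u, v) = s(x, y) := by
    intro u hu v hv hne h
    by_contra hs
    exact h (hadj u hu v hv hne hs)
  -- intersection of consecutive copies has at most 2 elements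
  have hcard2 : ∀ i ∈ Finset.Icc 1 (d - 1), (A i ∩ A (i + 1)).card ≤ 2 := by
    intro i hi
    obtain ⟨_, hmem⟩ := hcons i hi
    obtain ⟨⟨a, b⟩, hp⟩ := Quot.exists_rep (e i)
    have hsub : A i ∩ A (i + 1) ⊆ {a, b} := by
      intro z hz
      have := (hmem z).1 hz
      rw [← hp, Sym2.mem_iff] at this
      simpa [Finset.mem_insert, Finset.mem_singleton] using this
    calc (A i ∩ A (i + 1)).card ≤ ({a, b} : Finset V).card := Finset.card_le_card hsub
      _ ≤ 2 := by apply le_trans (Finset.card_insert_le _ _); simp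
  -- min and max of f over S
  have hSne : S.Nonempty := Finset.card_pos.1 (by omega)
  have hTne : (S.image f).Nonempty := hSne.image f
  set m := (S.image f).min' hTne with hm
  set M := (S.image f).max' hTne with hM
  obtain ⟨u₀, hu₀S, hfu₀⟩ := Finset.mem_image.1 ((S.image f).min'_mem hTne)
  obtain ⟨v₀, hv₀S, hfv₀⟩ := Finset.mem_image.1 ((S.image f).max'_mem hTne)
  have hm_le : ∀ u ∈ S, m ≤ f u := fun u hu =>
    Finset.min'_le _ _ (Finset.mem_image_of_mem f hu)
  have hM_ge : ∀ u ∈ S, f u ≤ M := fun u hu =>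
    Finset.le_max' _ _ (Finset.mem_image_of_mem f hu)
  have hmM : m ≤ M := le_trans (hm_le u₀ hu₀S) (hfu₀ ▸ hM_ge u₀ hu₀S)
  have hm1 : 1 ≤ m := by
    have := (hf1 u₀ hu₀S).1
    rw [Finset.mem_Icc] at this
    omega
  have hMd : M ≤ d := by
    have := (hf1 v₀ hv₀S).1
    rw [Finset.mem_Icc] at this
    omega
  by_cases hMm : M ≤ m + 1
  · by_cases hMeq : M = m
    · -- all in A m
      refine ⟨m, ?_, ?_⟩
      · rw [Finset.mem_Icc]; omega
      · intro u hu
        have : f u = m := le_antisymm (hMeq ▸ hM_ge u hu) (hm_le u hu)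
        exact this ▸ (hf1 u hu).2
    · have hMeq' : M = m + 1 := by omega
      refine ⟨M, by rw [Finset.mem_Icc]; omega, ?_⟩
      intro u hu
      by_cases hfu : f u = M
      · exact hfu ▸ (hf1 u hu).2
      · have hfum : f u = m := by
          have h1 := hm_le u hu; have h2 := hM_ge u hu; omega
        have hfv₀' : f v₀ = f u + 1 := by omega
        have huv₀ : u ≠ v₀ := by intro h; rw [h] at hfum; omega
        by_cases hA : (unionCliques A d).Adj u v₀
        · have := (hpin u hu v₀ hA hfv₀').1
          rwa [hfum, ← hMeq'] at this
        · have hmissuv : s(u, v₀) = s(x, y) := hmiss u hu v₀ hv₀S huv₀ hA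
          by_cases hw : ∃ w ∈ S, f w = M ∧ w ≠ v₀
          · obtain ⟨w, hwS, hfw, hwv⟩ := hw
            have huw : u ≠ w := by intro h; rw [h] at hfum; omega
            have hsym : s(u, w) ≠ s(x, y) := by
              intro h
              rw [← hmissuv, Sym2.congr_right] at h
              exact hwv h
            have hAuw := hadj u hu w hwS huw hsym
            have := (hpin u hu w hAuw (by omega)).1
            rwa [hfum, ← hMeq'] at this
          · push_neg at hw
            exfalso
            -- every w ∈ S \ {u, v₀} lies in A m ∩ A (m+1)
            have hsub : S \ {u, v₀} ⊆ A m ∩ A (m + 1) := by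
              intro w hw'
              simp only [Finset.mem_sdiff, Finset.mem_insert, Finset.mem_singleton,
                not_or] at hw'
              obtain ⟨hwS, hwu, hwv⟩ := hw'
              have hfwm : f w = m := by
                have h1 := hm_le w hwS; have h2 := hM_ge w hwS
                rcases Nat.lt_or_ge (f w) M with h | h
                · omega
                · exact absurd (hw w hwS (by omega)) hwv
              have hsym : s(w, v₀) ≠ s(x, y) := by
                intro h
                rw [← hmissuv, Sym2.congr_left] at h
                exact hwu h
              have hAwv := hadj w hwS v₀ hv₀S
                (by intro h; rw [h] at hfwm; omega) hsym
              have hp := hpin w hwS v₀ hAwv (by omega)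
              rw [hfwm] at hp
              exact Finset.mem_inter.2 ⟨hfwm ▸ (hf1 w hwS).2, hp.1⟩
            have hd1 : m ∈ Finset.Icc 1 (d - 1) := by rw [Finset.mem_Icc]; omega
            have hc1 := hcard2 m hd1
            have hc2 := Finset.card_le_card hsub
            have hc3 : (S \ {u, v₀}).card = k - 2 := by
              rw [Finset.card_sdiff_of_subset (by
                intro z hz
                simp only [Finset.mem_insert, Finset.mem_singleton] at hz
                rcases hz with rfl | rfl <;> assumption)]
              rw [hScard, Finset.card_insert_of_notMem (by simpa using huv₀),
                Finset.card_singleton]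
            omega
  · -- M ≥ m + 2 : impossible
    exfalso
    push_neg at hMm
    have huv₀ : u₀ ≠ v₀ := by intro h; rw [h, hfv₀] at hfu₀; omega
    have hnadj : ¬ (unionCliques A d).Adj u₀ v₀ := by
      intro h
      have := hadjf u₀ hu₀S v₀ h
      omega
    have hmissuv : s(u₀, v₀) = s(x, y) := hmiss u₀ hu₀S v₀ hv₀S huv₀ hnadj
    have hsub : S \ {u₀, v₀} ⊆ A (m + 1) ∩ A (m + 2) := by
      intro w hw'
      simp only [Finset.mem_sdiff, Finset.mem_insert, Finset.mem_singleton, not_or] at hw'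
      obtain ⟨hwS, hwu, hwv⟩ := hw'
      have hsym1 : s(w, u₀) ≠ s(x, y) := by
        intro h
        rw [← hmissuv, Sym2.eq_iff] at h
        rcases h with ⟨_, h2⟩ | ⟨h1, _⟩
        · exact huv₀ h2
        · exact hwv h1
      have hsym2 : s(w, v₀) ≠ s(x, y) := by
        intro h
        rw [← hmissuv, Sym2.congr_left] at h
        exact hwu h
      have hAwu := hadj w hwS u₀ hu₀S (Ne.symm (Ne.symm hwu)) hsym1
      have hAwv := hadj w hwS v₀ hv₀S (by intro h; exact hwv h) hsym2
      have h1 : f w ≤ f u₀ + 1 := hadjf u₀ hu₀S w hAwu.symm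
      have h2 : f v₀ ≤ f w + 1 := hadjf w hwS v₀ hAwv
      have hfw : f w = m + 1 := by
        have := hM_ge w hwS; omega
      have hMeq : M = m + 2 := by omega
      have hp := hpin w hwS v₀ hAwv (by omega)
      rw [hfw] at hp
      refine Finset.mem_inter.2 ⟨hfw ▸ (hf1 w hwS).2, hp.1⟩
    have hd1 : m + 1 ∈ Finset.Icc 1 (d - 1) := by
      rw [Finset.mem_Icc]; omega
    have hc1 : (A (m + 1) ∩ A (m + 2)).card ≤ 2 := hcard2 (m + 1) hd1
    have hc2 := Finset.card_le_card hsub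
    have hc3 : (S \ {u₀, v₀}).card = k - 2 := by
      rw [Finset.card_sdiff_of_subset (by
        intro z hz
        simp only [Finset.mem_insert, Finset.mem_singleton] at hz
        rcases hz with rfl | rfl <;> assumption)]
      rw [hScard, Finset.card_insert_of_notMem (by simpa using huv₀),
        Finset.card_singleton]
    omega
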